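/- Let A be a separable C*-algebra, B a unital C*-algebra, and ρ : A → B_∞ a *-homomorphism with the property that for every map η : ℕ → ℕ with η(n) → ∞, the *-homomorphisms π_{∞→ω} ∘ ρ and π_{∞→ω} ∘ η* ∘ ρ : A → B_ω are approximately unitarily equivalent. Then for every set-theoretic lift (ρ_n) of ρ (functions ρ_n : A → B such that for each a ∈ A the sequence (ρ_n(a))_n is bounded and represents ρ(a) in B_∞), every finite set F ⊆ A, every ε > 0 and every m ∈ ℕ, there exists k ≥ m such that for all n ≥ k there is a unitary u ∈ B with ‖u ρ_n(a) u* − ρ_k(a)‖ < ε for all a ∈ F. -/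

import Mathlib

/-!
STATEMENT 16: One-sided intertwining lemma.  Let `A` be a separable C*-algebra, `B` a unital
C*-algebra and `φ : A → B_∞` a *-homomorphism such that for every `η : ℕ → ℕ` with
`η(n) → ∞` the maps `π_{∞→ω} ∘ φ` and `π_{∞→ω} ∘ η* ∘ φ` into `B_ω` are approximately
unitarily equivalent.  Then for every set-theoretic lift `(φ_n)` of `φ`, finite `F ⊆ A`,
`ε > 0` and `m ∈ ℕ` there is `k ≥ m` such that for all `n ≥ k` there is a unitary `u ∈ B`
with `‖u φ_n(a) u* − φ_k(a)‖ < ε` for `a ∈ F`.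

`B_∞` and `B_ω` are encoded abstractly via surjective *-homomorphisms from/through
`ℓ∞(ℕ, B)` with the appropriate kernels; `ω` is a free ultrafilter on `ℕ`.  A set-theoretic
lift of `φ` is a function `L : A → ℓ∞(ℕ, B)` with `πB ∘ L = φ`.
-/

open Filter Topology
open scoped ENNReal

noncomputable section

/-- Reindexing a bounded sequence along `η : ℕ → ℕ`. -/
def reindex {B : Type*} [NonUnitalCStarAlgebra B]
    (x : lp (fun _ : ℕ => B) ∞) (η : ℕ → ℕ) : lp (fun _ : ℕ => B) ∞ :=
  ⟨fun n => x (η n), by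
    show Memℓp (fun n => x (η n)) ∞
    rw [memℓp_infty_iff]
    exact (lp.memℓp x).bddAbove.mono (by rintro y ⟨n, rfl⟩; exact ⟨η n, rfl⟩)⟩

set_option maxHeartbeats 2000000


lemma sqrt_inv_close {δ t : ℝ} (hδ0 : 0 < δ) (hδ : δ ≤ 1/2)
    (ht : t ∈ Set.Icc (1-δ) (1+δ)) : |(Real.sqrt t)⁻¹ - 1| ≤ δ := by
  obtain ⟨ht1, ht2⟩ := ht
  have h2' : (0:ℝ) < 1 - δ := by linarith
  have ht0 : 0 < t := lt_of_lt_of_le h2' ht1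
  have hst : 0 < Real.sqrt t := Real.sqrt_pos.2 ht0
  have hinv : (Real.sqrt t)⁻¹ * Real.sqrt t = 1 := inv_mul_cancel₀ hst.ne'
  have hcube : δ^3 ≤ δ^2 := by nlinarith
  rw [abs_le]
  constructor
  · -- need (√t)⁻¹ ≥ 1 - δ, i.e. √t ≤ 1/(1-δ)
    have hsq : Real.sqrt t ≤ 1/(1-δ) := by
      rw [show (1:ℝ)/(1-δ) = Real.sqrt ((1/(1-δ))^2) from
        (Real.sqrt_sq (by positivity)).symm]
      apply Real.sqrt_le_sqrt
      rw [div_pow, one_pow, le_div_iff₀ (by positivity)]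
      nlinarith [mul_le_mul_of_nonneg_right ht2 (sq_nonneg (1-δ))]
    have h9 : (1-δ) * Real.sqrt t ≤ 1 := by
      calc (1-δ) * Real.sqrt t ≤ (1-δ) * (1/(1-δ)) :=
            mul_le_mul_of_nonneg_left hsq (le_of_lt h2')
        _ = 1 := by field_simp
    nlinarith
  · -- need (√t)⁻¹ ≤ 1 + δ, i.e. √t ≥ 1/(1+δ)
    have hsq : (1:ℝ)/(1+δ) ≤ Real.sqrt t := by
      rw [show (1:ℝ)/(1+δ) = Real.sqrt ((1/(1+δ))^2) from
        (Real.sqrt_sq (by positivity)).symm]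
      apply Real.sqrt_le_sqrt
      rw [div_pow, one_pow, div_le_iff₀ (by positivity)]
      nlinarith [mul_le_mul_of_nonneg_right ht1 (sq_nonneg (1+δ))]
    have h9 : 1 ≤ (1+δ) * Real.sqrt t := by
      calc (1:ℝ) = (1+δ) * (1/(1+δ)) := by field_simp
        _ ≤ (1+δ) * Real.sqrt t := mul_le_mul_of_nonneg_left hsq (by positivity)
    nlinarith

/-- Spectrum of a selfadjoint element close to one. -/
lemma spec_close_one {B : Type*} [CStarAlgebra B] [Nontrivial B] {δ : ℝ}
    {y : B} (_hy : IsSelfAdjoint y) (hyd : ‖y - 1‖ ≤ δ) :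
    spectrum ℝ y ⊆ Set.Icc (1-δ) (1+δ) := by
  intro t ht
  have h1 : t - 1 ∈ spectrum ℝ (y - 1) := by
    have h := spectrum.sub_singleton_eq (R := ℝ) y 1
    rw [map_one] at h
    rw [← h]
    exact Set.sub_mem_sub ht rfl
  have hb : ‖t - (1:ℝ)‖ ≤ ‖y - 1‖ := spectrum.norm_le_norm_of_mem h1
  rw [Real.norm_eq_abs, abs_le] at hb
  constructor
  · linarith [hb.1]
  · linarith [hb.2]

/-- Polar decomposition existence: an approximate unitary is close to a unitary. -/
lemma polar_approx {B : Type*} [CStarAlgebra B] [Nontrivial B] {x : B} {δ : ℝ}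
    (hδ0 : 0 < δ) (hδ : δ ≤ 1/2)
    (h1 : ‖star x * x - 1‖ ≤ δ) (h2 : ‖x * star x - 1‖ ≤ δ) :
    ∃ u : B, (star u * u = 1 ∧ u * star u = 1) ∧ ‖u - x‖ ≤ 2 * δ := by
  set s : B := star x * x with hs_def
  have hs_sa : IsSelfAdjoint s := IsSelfAdjoint.star_mul_self x
  have hs_spec : spectrum ℝ s ⊆ Set.Icc (1-δ) (1+δ) := spec_close_one hs_sa h1
  have hhalf : ∀ t ∈ spectrum ℝ s, (0:ℝ) < t := by
    intro t ht
    have := (hs_spec ht).1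
    linarith
  have hf : ContinuousOn (fun t : ℝ => (Real.sqrt t)⁻¹) (spectrum ℝ s) := by
    apply ContinuousOn.inv₀ Real.continuous_sqrt.continuousOn
    intro t ht
    exact (Real.sqrt_pos.2 (hhalf t ht)).ne'
  have hg : ContinuousOn Real.sqrt (spectrum ℝ s) := Real.continuous_sqrt.continuousOn
  set h : B := cfc (fun t : ℝ => (Real.sqrt t)⁻¹) s with hh_def
  have hsa_h : IsSelfAdjoint h := cfc_predicate _ s
  -- h is invertible
  have hinv1 : h * cfc Real.sqrt s = 1 := by
    rw [hh_def, ← cfc_mul _ _ s hf hg]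
    rw [cfc_congr (g := fun _ : ℝ => (1:ℝ))
      (fun t ht => inv_mul_cancel₀ (Real.sqrt_pos.2 (hhalf t ht)).ne')]
    exact cfc_one ℝ s
  have hinv2 : cfc Real.sqrt s * h = 1 := by
    rw [hh_def, ← cfc_mul _ _ s hg hf]
    rw [cfc_congr (g := fun _ : ℝ => (1:ℝ))
      (fun t ht => mul_inv_cancel₀ (Real.sqrt_pos.2 (hhalf t ht)).ne')]
    exact cfc_one ℝ s
  have hhu : IsUnit h := ⟨⟨h, cfc Real.sqrt s, hinv1, hinv2⟩, rfl⟩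
  -- h * s * h = 1
  have hmulcont : ContinuousOn (fun t : ℝ => (Real.sqrt t)⁻¹ * t) (spectrum ℝ s) :=
    hf.mul continuousOn_id
  have e0 : cfc (fun t : ℝ => (Real.sqrt t)⁻¹ * t) s
      = cfc (fun t : ℝ => (Real.sqrt t)⁻¹) s * cfc (fun t : ℝ => t) s :=
    cfc_mul _ _ s hf continuousOn_id
  have e1 : cfc (fun t : ℝ => (Real.sqrt t)⁻¹ * t * (Real.sqrt t)⁻¹) s
      = cfc (fun t : ℝ => (Real.sqrt t)⁻¹ * t) s * cfc (fun t : ℝ => (Real.sqrt t)⁻¹) s :=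
    cfc_mul _ _ s hmulcont hf
  have hid : cfc (fun t : ℝ => t) s = s := cfc_id' ℝ s
  have hmain : h * s * h = 1 := by
    have e2 : h * s * h = cfc (fun t : ℝ => (Real.sqrt t)⁻¹ * t * (Real.sqrt t)⁻¹) s := by
      rw [e1, e0, hid, hh_def]
    rw [e2]
    rw [cfc_congr (g := fun _ : ℝ => (1:ℝ)) ?_]
    · exact cfc_one ℝ s
    · intro t ht
      have ht0 : 0 < t := hhalf t ht
      have hsq : Real.sqrt t * Real.sqrt t = t := Real.mul_self_sqrt ht0.le
      have hst : Real.sqrt t ≠ 0 := (Real.sqrt_pos.2 ht0).ne'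
      show (Real.sqrt t)⁻¹ * t * (Real.sqrt t)⁻¹ = 1
      rw [← hsq]
      field_simp
      rw [Real.sqrt_sq (Real.sqrt_nonneg t)]
  -- invertibility of x
  have hsu : IsUnit s := by
    apply spectrum.isUnit_of_zero_notMem (R := ℝ)
    intro h0
    have := (hs_spec h0).1
    linarith
  have htu : IsUnit (x * star x) := by
    apply spectrum.isUnit_of_zero_notMem (R := ℝ)
    intro h0
    have := (spec_close_one (IsSelfAdjoint.mul_star_self x) h2 h0).1
    linarith
  have hl : (↑hsu.unit⁻¹ * star x) * x = 1 := by
    rw [mul_assoc]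
    exact hsu.val_inv_mul
  have hr : x * (star x * ↑htu.unit⁻¹) = 1 := by
    rw [← mul_assoc]
    exact htu.mul_val_inv
  have hlr : (↑hsu.unit⁻¹ * star x : B) = star x * ↑htu.unit⁻¹ := by
    have eA : (↑hsu.unit⁻¹ * star x) * (x * (star x * ↑htu.unit⁻¹))
        = ↑hsu.unit⁻¹ * star x := by rw [hr, mul_one]
    have eB : (↑hsu.unit⁻¹ * star x) * (x * (star x * ↑htu.unit⁻¹))
        = star x * ↑htu.unit⁻¹ := by
      rw [← mul_assoc, hl, one_mul]
    exact eA.symm.trans eB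
  have hxu : IsUnit x := ⟨⟨x, star x * ↑htu.unit⁻¹, hr, by rw [← hlr]; exact hl⟩, rfl⟩
  have huu : IsUnit (x * h) := hxu.mul hhu
  have hu1 : star (x * h) * (x * h) = 1 := by
    calc star (x * h) * (x * h) = (h * star x) * (x * h) := by
          rw [star_mul, hsa_h.star_eq]
      _ = h * s * h := by rw [hs_def]; noncomm_ring
      _ = 1 := hmain
  refine ⟨x * h, ⟨hu1, ?_⟩, ?_⟩
  · -- (x*h) * star (x*h) = 1
    have h6 : star (x * h) = ↑huu.unit⁻¹ := by
      calc star (x * h) = star (x * h) * ((x * h) * ↑huu.unit⁻¹) := by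
            rw [huu.mul_val_inv, mul_one]
        _ = (star (x * h) * (x * h)) * ↑huu.unit⁻¹ :=
            (mul_assoc (star (x * h)) (x * h) (↑huu.unit⁻¹ : B)).symm
        _ = ↑huu.unit⁻¹ := by rw [hu1, one_mul]
    rw [h6]
    exact huu.mul_val_inv
  · -- norm bound
    have hb1 : ‖h - 1‖ ≤ δ := by
      have hsub : cfc (fun t : ℝ => (Real.sqrt t)⁻¹ - 1) s
          = cfc (fun t : ℝ => (Real.sqrt t)⁻¹) s - cfc (fun _ : ℝ => (1:ℝ)) s :=
        cfc_sub _ _ s hf continuousOn_const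
      have hone : cfc (fun _ : ℝ => (1:ℝ)) s = 1 := cfc_one ℝ s
      have : h - 1 = cfc (fun t : ℝ => (Real.sqrt t)⁻¹ - 1) s := by
        rw [hsub, hone, hh_def]
      rw [this]
      apply norm_cfc_le hδ0.le
      intro t ht
      rw [Real.norm_eq_abs]
      exact sqrt_inv_close hδ0 hδ (hs_spec ht)
    have hxnorm : ‖x‖ ≤ 2 := by
      have hna : ‖star x * x‖ = ‖x‖ * ‖x‖ := CStarRing.norm_star_mul_self
      have hs2 : ‖s‖ ≤ 1 + δ := by
        calc ‖s‖ = ‖(s - 1) + 1‖ := by rw [sub_add_cancel]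
          _ ≤ ‖s - 1‖ + ‖(1:B)‖ := norm_add_le _ _
          _ ≤ δ + 1 := by rw [norm_one]; linarith
          _ = 1 + δ := by ring
      have : ‖x‖ * ‖x‖ ≤ 1 + δ := by rw [← hna]; exact hs2
      nlinarith [norm_nonneg x]
    have heq : x * h - x = x * (h - 1) := by noncomm_ring
    calc ‖x * h - x‖ = ‖x * (h - 1)‖ := by rw [heq]
      _ ≤ ‖x‖ * ‖h - 1‖ := norm_mul_le _ _
      _ ≤ 2 * δ := by
          apply mul_le_mul hxnorm hb1 (norm_nonneg _) (by norm_num)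


def evB (B : Type*) [CStarAlgebra B] (n : ℕ) :
    lp (fun _ : ℕ => B) ∞ →⋆ₙₐ[ℂ] B where
  toFun x := x n
  map_smul' c x := congr_fun (lp.coeFn_smul c x) n
  map_zero' := rfl
  map_add' x y := congr_fun (lp.coeFn_add x y) n
  map_mul' x y := congr_fun (lp.infty_coeFn_mul x y) n
  map_star' x := congr_fun (lp.coeFn_star x) n

lemma evB_cont (B : Type*) [CStarAlgebra B] (n : ℕ) : Continuous (evB B n) := by
  apply AddMonoidHomClass.continuous_of_bound (evB B n) 1
  intro x
  show ‖(x : ℕ → B) n‖ ≤ 1 * ‖x‖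
  simpa using lp.norm_apply_le_norm ENNReal.top_ne_zero x n

set_option maxHeartbeats 1000000 in
/-- If the image of `e` in the ultrapower has norm `< c` then `ω`-many coordinates of `e`
have norm `< c`. -/
lemma key_small {B : Type*} [CStarAlgebra B] [Nontrivial B]
    {Binf : Type*} [NonUnitalCStarAlgebra Binf]
    (πB : lp (fun _ : ℕ => B) ∞ →⋆ₙₐ[ℂ] Binf)
    (ω : Ultrafilter ℕ)
    {Bom : Type*} [CStarAlgebra Bom] [Nontrivial Bom]
    (πω : Binf →⋆ₙₐ[ℂ] Bom)
    (hωker : ∀ x : lp (fun _ : ℕ => B) ∞,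
      πω (πB x) = 0 ↔ Tendsto (fun n => ‖x n‖) (ω : Filter ℕ) (𝓝 0))
    (e : lp (fun _ : ℕ => B) ∞) {c : ℝ} (hc : ‖πω (πB e)‖ < c) :
    ∀ᶠ n in (ω : Filter ℕ), ‖e n‖ < c := by
  letI : PartialOrder B := CStarAlgebra.spectralOrder B
  haveI : StarOrderedRing B := CStarAlgebra.spectralOrderedRing B
  letI : NonUnitalContinuousFunctionalCalculus ℝ (lp (fun _ : ℕ => B) ∞) IsSelfAdjoint :=
    IsSelfAdjoint.instNonUnitalContinuousFunctionalCalculus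
  by_contra hcon
  have hS : ∀ᶠ n in (ω : Filter ℕ), c ≤ ‖e n‖ := by
    have := (Ultrafilter.compl_mem_iff_notMem (s := {n | ‖e n‖ < c}) (f := ω)).2 hcon
    filter_upwards [this] with n hn
    exact not_lt.1 hn
  set Q : lp (fun _ : ℕ => B) ∞ →⋆ₙₐ[ℂ] Bom := πω.comp πB with hQ_def
  have hQcont : Continuous Q := by
    apply AddMonoidHomClass.continuous_of_bound Q 1
    intro y
    simpa using NonUnitalStarAlgHom.norm_apply_le Q y
  have hb0 : (0:ℝ) ≤ ‖πω (πB e)‖ := norm_nonneg _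
  have hcpos : (0:ℝ) < c := lt_of_le_of_lt hb0 hc
  set b : Bom := πω (πB e) with hb_def
  set r : ℝ := (c^2 + ‖b‖^2)/2 with hr_def
  have hbr : ‖b‖ * ‖b‖ < r := by nlinarith
  have hrc : r < c^2 := by nlinarith
  have hr0 : 0 < r := by nlinarith
  set g : ℝ → ℝ := fun t => max (t - r) 0 with hg_def
  have hgcont : Continuous g := (continuous_id.sub continuous_const).max continuous_const
  have hg0 : g 0 = 0 := max_eq_right (by linarith)
  set a : lp (fun _ : ℕ => B) ∞ := star e * e with ha_def
  have ha_sa : IsSelfAdjoint a := IsSelfAdjoint.star_mul_self e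
  -- Q commutes with cfcₙ
  have step1 : Q (cfcₙ g a) = cfcₙ g (Q a) :=
    NonUnitalStarAlgHom.map_cfcₙ Q g a hgcont.continuousOn hg0 hQcont ha_sa (ha_sa.map Q)
  -- cfcₙ g (Q a) = 0
  have hQa : Q a = star (Q e) * Q e := by
    rw [ha_def, map_mul, map_star]
  have step2 : cfcₙ g (Q a) = 0 := by
    have hz : ∀ t ∈ quasispectrum ℝ (Q a), g t = 0 := by
      intro t ht
      rw [quasispectrum_eq_spectrum_union_zero] at ht
      rcases ht with ht | ht
      · have hle : ‖t‖ ≤ ‖Q a‖ := spectrum.norm_le_norm_of_mem ht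
        have hQan : ‖Q a‖ = ‖b‖ * ‖b‖ := by
          rw [hQa]
          exact CStarRing.norm_star_mul_self
        rw [Real.norm_eq_abs, hQan] at hle
        have htr : t ≤ r := le_trans (le_trans (le_abs_self t) hle) hbr.le
        exact max_eq_right (by linarith)
      · rw [Set.mem_singleton_iff] at ht
        rw [ht]; exact hg0
    calc cfcₙ g (Q a) = cfcₙ (fun _ : ℝ => (0:ℝ)) (Q a) := cfcₙ_congr hz
      _ = 0 := cfcₙ_zero ℝ _
  have step3 : Tendsto (fun n => ‖(cfcₙ g a) n‖) (ω : Filter ℕ) (𝓝 0) := by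
    apply (hωker (cfcₙ g a)).1
    have : πω (πB (cfcₙ g a)) = Q (cfcₙ g a) := rfl
    rw [this, step1, step2]
  -- coordinates of cfcₙ g a
  have step4 : ∀ n, (cfcₙ g a) n = cfcₙ g (star (e n) * e n) := by
    intro n
    have hmap := NonUnitalStarAlgHomClass.map_cfcₙ (evB B n) g a hgcont.continuousOn hg0
      (evB_cont B n) ha_sa (ha_sa.map (evB B n))
    have hev : evB B n a = star (e n) * e n := rfl
    rw [← hev]
    exact hmap
  -- lower bound on the bad set
  have step5 : ∀ n, c ≤ ‖e n‖ → c^2 - r ≤ ‖(cfcₙ g a) n‖ := by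
    intro n hn
    rw [step4 n]
    have hnn : (0:B) ≤ star (e n) * e n := star_mul_self_nonneg (e n)
    have hsan : IsSelfAdjoint (star (e n) * e n) := IsSelfAdjoint.star_mul_self (e n)
    have hmem : ‖star (e n) * e n‖ ∈ spectrum ℝ (star (e n) * e n) :=
      CStarAlgebra.norm_mem_spectrum_of_nonneg hnn
    have hmemq : ‖star (e n) * e n‖ ∈ quasispectrum ℝ (star (e n) * e n) :=
      spectrum_subset_quasispectrum ℝ _ hmem
    have hlow := norm_apply_le_norm_cfcₙ g (star (e n) * e n) hmemq
      hgcont.continuousOn hg0 hsan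
    have hnorm : ‖star (e n) * e n‖ = ‖e n‖ * ‖e n‖ := CStarRing.norm_star_mul_self
    have hge : c^2 ≤ ‖star (e n) * e n‖ := by
      rw [hnorm]; nlinarith
    have hgval : g ‖star (e n) * e n‖ = ‖star (e n) * e n‖ - r :=
      max_eq_left (by linarith)
    calc c^2 - r ≤ ‖star (e n) * e n‖ - r := by linarith
      _ = ‖g ‖star (e n) * e n‖‖ := by
          rw [hgval, Real.norm_eq_abs, abs_of_nonneg (by linarith)]
      _ ≤ ‖cfcₙ g (star (e n) * e n)‖ := hlow
  -- contradiction
  have hsmall : ∀ᶠ n in (ω : Filter ℕ), ‖(cfcₙ g a) n‖ < c^2 - r :=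
    step3.eventually_lt_const (by nlinarith)
  obtain ⟨n, hn1, hn2⟩ := (hsmall.and hS).exists
  exact absurd (step5 n hn2) (not_le.2 hn1)

theorem statement16
    {B : Type*} [CStarAlgebra B]
    {A : Type*} [NonUnitalCStarAlgebra A] [TopologicalSpace.SeparableSpace A]
    -- the sequence algebra `B_∞`, encoded abstractly:
    {Binf : Type*} [NonUnitalCStarAlgebra Binf]
    (πB : lp (fun _ : ℕ => B) ∞ →⋆ₙₐ[ℂ] Binf)
    (hπsurj : Function.Surjective πB)
    (hπker : ∀ x : lp (fun _ : ℕ => B) ∞,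
      πB x = 0 ↔ Tendsto (fun n => ‖x n‖) atTop (𝓝 0))
    -- a free ultrafilter `ω` on `ℕ` and the ultrapower `B_ω`, encoded abstractly:
    (ω : Ultrafilter ℕ) (hω : (ω : Filter ℕ) ≤ Filter.cofinite)
    {Bom : Type*} [CStarAlgebra Bom]
    (πω : Binf →⋆ₙₐ[ℂ] Bom) (hωsurj : Function.Surjective πω)
    (hωker : ∀ x : lp (fun _ : ℕ => B) ∞,
      πω (πB x) = 0 ↔ Tendsto (fun n => ‖x n‖) (ω : Filter ℕ) (𝓝 0))
    -- the *-homomorphism `φ : A → B_∞`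
    (φ : A →⋆ₙₐ[ℂ] Binf)
    -- hypothesis: for every `η → ∞`, `π_{∞→ω} ∘ φ` and `π_{∞→ω} ∘ η* ∘ φ` are
    -- approximately unitarily equivalent (expressed via any set-theoretic lift `L` of `φ`)
    (hequiv : ∀ η : ℕ → ℕ, Tendsto η atTop atTop →
      ∀ L : A → lp (fun _ : ℕ => B) ∞, (∀ a, πB (L a) = φ a) →
        ∃ u : ℕ → Bom, (∀ j, star (u j) * u j = 1 ∧ u j * star (u j) = 1) ∧
          ∀ a : A, Tendsto
            (fun j => ‖u j * πω (φ a) * star (u j) - πω (πB (reindex (L a) η))‖)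
            atTop (𝓝 0)) :
    -- conclusion:
    ∀ L : A → lp (fun _ : ℕ => B) ∞, (∀ a, πB (L a) = φ a) →
      ∀ F : Finset A, ∀ ε > (0 : ℝ), ∀ m : ℕ,
        ∃ k, m ≤ k ∧ ∀ n, k ≤ n →
          ∃ u : B, (star u * u = 1 ∧ u * star u = 1) ∧
            ∀ a ∈ F, ‖u * (L a) n * star u - (L a) k‖ < ε := by
  intro L hL F ε hε m
  rcases subsingleton_or_nontrivial B with hB | hB
  · refine ⟨m, le_rfl, fun n _ => ⟨1, ⟨Subsingleton.elim _ _, Subsingleton.elim _ _⟩,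
      fun a _ => ?_⟩⟩
    have h0 : (1 * (L a) n * star 1 - (L a) m : B) = 0 := Subsingleton.elim _ _
    rw [h0, norm_zero]; exact hε
  -- the constant-one sequence
  let onelp : lp (fun _ : ℕ => B) ∞ := ⟨(1 : ∀ _ : ℕ, B), one_memℓp_infty⟩
  have hq1 : πω (πB onelp) = 1 := by
    obtain ⟨w, hw⟩ := hωsurj 1
    obtain ⟨t, ht⟩ := hπsurj w
    have honemul : onelp * t = t := by
      apply lp.ext
      funext n
      exact one_mul (t n)
    calc πω (πB onelp) = πω (πB onelp) * 1 := (mul_one _).symm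
      _ = πω (πB onelp) * πω (πB t) := by rw [ht, hw]
      _ = πω (πB (onelp * t)) := by rw [map_mul, map_mul]
      _ = 1 := by rw [honemul, ht, hw]
  have hone_ne : πω (πB onelp) ≠ 0 := by
    intro h0
    have h1 := (hωker onelp).1 h0
    have h2 : Tendsto (fun _ : ℕ => (1:ℝ)) (ω : Filter ℕ) (𝓝 0) := by
      have : (fun n : ℕ => ‖onelp n‖) = fun _ : ℕ => (1:ℝ) := by
        funext n; exact norm_one
      rwa [this] at h1
    have := tendsto_nhds_unique h2 tendsto_const_nhds
    norm_num at this
  haveI : Nontrivial Bom := nontrivial_of_ne _ _ (hq1 ▸ hone_ne)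
  by_contra hcon
  push_neg at hcon
  -- hcon : ∀ k, m ≤ k → ∃ n, k ≤ n ∧ ∀ u, (unitary) → ∃ a ∈ F, ε ≤ ‖...‖
  set η : ℕ → ℕ := fun k => if h : m ≤ k then (hcon k h).choose else k with hη_def
  have hηge : ∀ k, k ≤ η k := by
    intro k
    by_cases h : m ≤ k
    · rw [hη_def]; simp only [dif_pos h]
      exact (hcon k h).choose_spec.1
    · rw [hη_def]; simp only [dif_neg h]; exact le_rfl
  have hηt : Tendsto η atTop atTop := tendsto_atTop_mono hηge tendsto_id
  have hbad : ∀ k, m ≤ k → ∀ u : B, (star u * u = 1 ∧ u * star u = 1) →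
      ∃ a ∈ F, ε ≤ ‖u * (L a) (η k) * star u - (L a) k‖ := by
    intro k hk
    have hk' : η k = (hcon k hk).choose := by rw [hη_def]; simp only [dif_pos hk]
    rw [hk']
    exact (hcon k hk).choose_spec.2
  -- constants
  set C : ℝ := 1 + ∑ a ∈ F, ‖L a‖ with hC_def
  have hCpos : 0 < C := by
    have : (0:ℝ) ≤ ∑ a ∈ F, ‖L a‖ := Finset.sum_nonneg fun i _ => norm_nonneg _
    rw [hC_def]; linarith
  have hCb : ∀ a ∈ F, ‖L a‖ ≤ C := by
    intro a ha
    have := Finset.single_le_sum (f := fun i => ‖L i‖) (fun i _ => norm_nonneg _) ha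
    rw [hC_def]; linarith
  set δ : ℝ := min (1/2 : ℝ) (ε/(12*C)) with hδ_def
  have hδ0 : 0 < δ := lt_min (by norm_num) (by positivity)
  have hδhalf : δ ≤ 1/2 := min_le_left _ _
  have hδC : 6*C*δ ≤ ε/2 := by
    have h1 : δ ≤ ε/(12*C) := min_le_right _ _
    have h2 : 6*C*δ ≤ 6*C*(ε/(12*C)) := by
      apply mul_le_mul_of_nonneg_left h1 (by positivity)
    have h3 : 6*C*(ε/(12*C)) = ε/2 := by field_simp; ring
    linarith
  clear_value C δ
  -- the approximate unitaries
  obtain ⟨U, hUu, hUt⟩ := hequiv η hηt L hL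
  have hevj : ∀ᶠ j in atTop, ∀ a ∈ F,
      ‖U j * πω (φ a) * star (U j) - πω (πB (reindex (L a) η))‖ < ε/2 := by
    rw [Filter.eventually_all_finset]
    intro a _
    exact (hUt a).eventually_lt_const (by positivity)
  obtain ⟨j, hj⟩ := hevj.exists
  -- lift U j
  have hqsurj : ∀ z : Bom, ∃ y : lp (fun _ : ℕ => B) ∞, πω (πB y) = z := by
    intro z
    obtain ⟨w, hw⟩ := hωsurj z
    obtain ⟨y, hy⟩ := hπsurj w
    exact ⟨y, by rw [hy, hw]⟩
  obtain ⟨xl, hxl⟩ := hqsurj (U j)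
  -- the unitarity defects tend to zero along ω
  have hy1 : πω (πB (star xl * xl - onelp)) = 0 := by
    rw [map_sub, map_sub, map_mul, map_mul, map_star, map_star, hxl, hq1, (hUu j).1, sub_self]
  have hy2 : πω (πB (xl * star xl - onelp)) = 0 := by
    rw [map_sub, map_sub, map_mul, map_mul, map_star, map_star, hxl, hq1, (hUu j).2, sub_self]
  have hy1ev : ∀ᶠ n in (ω : Filter ℕ), ‖(star xl * xl - onelp) n‖ < δ :=
    ((hωker _).1 hy1).eventually_lt_const hδ0
  have hy2ev : ∀ᶠ n in (ω : Filter ℕ), ‖(xl * star xl - onelp) n‖ < δ :=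
    ((hωker _).1 hy2).eventually_lt_const hδ0
  -- the conjugation errors are small on an ω-large set
  have hwev : ∀ᶠ n in (ω : Filter ℕ), ∀ a ∈ F,
      ‖(xl * (L a) * star xl - reindex (L a) η) n‖ < ε/2 := by
    rw [Filter.eventually_all_finset]
    intro a ha
    apply key_small πB ω πω hωker
    have hQw : πω (πB (xl * (L a) * star xl - reindex (L a) η))
        = U j * πω (φ a) * star (U j) - πω (πB (reindex (L a) η)) := by
      rw [map_sub, map_sub, map_mul, map_mul, map_mul, map_mul, map_star, map_star,
        hxl, hL a]
    rw [hQw]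
    exact hj a ha
  have hmev : ∀ᶠ n in (ω : Filter ℕ), m ≤ n := by
    apply Filter.Eventually.filter_mono hω
    rw [Nat.cofinite_eq_atTop]
    exact eventually_ge_atTop m
  obtain ⟨k, hkw, hk1, hk2, hkm⟩ := (hwev.and (hy1ev.and (hy2ev.and hmev))).exists
  -- extract coordinatewise facts at k
  obtain ⟨x, hx_def⟩ : ∃ x : B, x = xl k := ⟨_, rfl⟩
  have hco1 : (star xl * xl - onelp) k = star x * x - 1 := by
    rw [hx_def, lp.coeFn_sub]
    rfl
  have hco2 : (xl * star xl - onelp) k = x * star x - 1 := by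
    rw [hx_def, lp.coeFn_sub]
    rfl
  rw [hco1] at hk1
  rw [hco2] at hk2
  have hcomp : ∀ a ∈ F, ‖x * (L a) k * star x - (L a) (η k)‖ < ε/2 := by
    intro a ha
    have hco3 : (xl * (L a) * star xl - reindex (L a) η) k
        = x * (L a) k * star x - (L a) (η k) := by
      rw [hx_def, lp.coeFn_sub]
      rfl
    rw [← hco3]
    exact hkw a ha
  -- produce the unitary
  obtain ⟨u, ⟨huA, huB⟩, hu_close⟩ := polar_approx hδ0 hδhalf hk1.le hk2.le
  have hxnorm : ‖x‖ ≤ 2 := by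
    have hna : ‖star x * x‖ = ‖x‖ * ‖x‖ := CStarRing.norm_star_mul_self
    have hs2 : ‖star x * x‖ ≤ 1 + δ := by
      calc ‖star x * x‖ = ‖(star x * x - 1) + 1‖ := by rw [sub_add_cancel]
        _ ≤ ‖star x * x - 1‖ + ‖(1:B)‖ := norm_add_le _ _
        _ ≤ δ + 1 := by rw [norm_one]; linarith
        _ = 1 + δ := by ring
    nlinarith [norm_nonneg x]
  have hunorm : ‖u‖ ≤ 1 := by
    have hna : ‖star u * u‖ = ‖u‖ * ‖u‖ := CStarRing.norm_star_mul_self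
    rw [huA, norm_one] at hna
    nlinarith [norm_nonneg u]
  have husnorm : ‖star u‖ ≤ 1 := by rw [norm_star]; exact hunorm
  -- final estimate
  have hfinal : ∀ a ∈ F, ‖star u * (L a) (η k) * star (star u) - (L a) k‖ < ε := by
    intro a ha
    obtain ⟨cc, hcc_def⟩ : ∃ cc : B, cc = (L a) k := ⟨_, rfl⟩
    obtain ⟨d, hd_def⟩ : ∃ d : B, d = (L a) (η k) := ⟨_, rfl⟩
    have hccn : ‖cc‖ ≤ C := by
      rw [hcc_def]
      exact le_trans (lp.norm_apply_le_norm ENNReal.top_ne_zero (L a) k) (hCb a ha)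
    have hid : u * cc * star u - x * cc * star x
        = (u - x) * cc * star u + x * cc * (star u - star x) := by noncomm_ring
    have b1 : ‖(u - x) * cc * star u‖ ≤ 2*δ*C*1 := by
      calc ‖(u - x) * cc * star u‖ ≤ ‖(u - x) * cc‖ * ‖star u‖ := norm_mul_le _ _
        _ ≤ ‖u - x‖ * ‖cc‖ * ‖star u‖ :=
            mul_le_mul_of_nonneg_right (norm_mul_le _ _) (norm_nonneg _)
        _ ≤ 2*δ*C*1 := by
            apply mul_le_mul (mul_le_mul hu_close hccn (norm_nonneg _) (by positivity))
              husnorm (norm_nonneg _) (by positivity)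
    have hstarux : ‖star u - star x‖ ≤ 2*δ := by
      rw [← star_sub, norm_star]
      exact hu_close
    have b2 : ‖x * cc * (star u - star x)‖ ≤ 2*C*(2*δ) := by
      calc ‖x * cc * (star u - star x)‖ ≤ ‖x * cc‖ * ‖star u - star x‖ := norm_mul_le _ _
        _ ≤ ‖x‖ * ‖cc‖ * ‖star u - star x‖ :=
            mul_le_mul_of_nonneg_right (norm_mul_le _ _) (norm_nonneg _)
        _ ≤ 2*C*(2*δ) := by
            apply mul_le_mul (mul_le_mul hxnorm hccn (norm_nonneg _) (by norm_num))
              hstarux (norm_nonneg _) (by positivity)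
    have est1 : ‖u * cc * star u - x * cc * star x‖ ≤ 6*C*δ := by
      calc ‖u * cc * star u - x * cc * star x‖
          = ‖(u - x) * cc * star u + x * cc * (star u - star x)‖ := by rw [hid]
        _ ≤ ‖(u - x) * cc * star u‖ + ‖x * cc * (star u - star x)‖ := norm_add_le _ _
        _ ≤ 6*C*δ := by linarith [b1, b2]
    have est2 : ‖u * cc * star u - d‖ < ε := by
      calc ‖u * cc * star u - d‖
          = ‖(u * cc * star u - x * cc * star x) + (x * cc * star x - d)‖ := by
            rw [sub_add_sub_cancel]
        _ ≤ ‖u * cc * star u - x * cc * star x‖ + ‖x * cc * star x - d‖ := norm_add_le _ _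
        _ < 6*C*δ + ε/2 := by
            have hc' := hcomp a ha
            rw [← hcc_def, ← hd_def] at hc'
            exact add_lt_add_of_le_of_lt est1 hc'
        _ ≤ ε := by linarith [hδC]
    have hmid : star u * (u * cc * star u) * u = cc := by
      calc star u * (u * cc * star u) * u = (star u * u) * cc * (star u * u) := by noncomm_ring
        _ = cc := by rw [huA, one_mul, mul_one]
    have hid2 : star u * (d - u * cc * star u) * u = star u * d * u - cc := by
      calc star u * (d - u * cc * star u) * u
          = star u * d * u - star u * (u * cc * star u) * u := by noncomm_ring
        _ = star u * d * u - cc := by rw [hmid]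
    have est3 : ‖star u * d * u - cc‖ < ε := by
      calc ‖star u * d * u - cc‖ = ‖star u * (d - u * cc * star u) * u‖ := by rw [hid2]
        _ ≤ ‖star u * (d - u * cc * star u)‖ * ‖u‖ := norm_mul_le _ _
        _ ≤ ‖star u‖ * ‖d - u * cc * star u‖ * ‖u‖ :=
            mul_le_mul_of_nonneg_right (norm_mul_le _ _) (norm_nonneg _)
        _ ≤ 1 * ‖d - u * cc * star u‖ * 1 := by gcongr
        _ = ‖d - u * cc * star u‖ := by rw [one_mul, mul_one]
        _ = ‖u * cc * star u - d‖ := norm_sub_rev _ _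
        _ < ε := est2
    rw [star_star, ← hcc_def, ← hd_def]
    exact est3
  obtain ⟨a, haF, hage⟩ := hbad k hkm (star u)
    ⟨by rw [star_star]; exact huB, by rw [star_star]; exact huA⟩
  exact absurd hage (not_le.2 (hfinal a haF))
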